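/- arXiv:2507.19761 — 5 statements merged into one kernel-verified Lean document; each statement's English description precedes it below -/
import Mathlib

section
/- Let H4 be the Sweedler Hopf algebra over R with basis 1, g, v, gv, and define the linear map ·: H4 ⊗ H_ss → H_ss (depending on real parameters k1,k2,k3,k4,l1,l2,l3,l4) by: 1·x = x for all x; g·x = 0 for all basis x; v·1 = k1 + k2 e1 + k3 e2 - k4 e3, v·e1 = k2 + k1 e1 + k4 e2 - k3 e3, v·e2 = k1 e2 + k2 e3, v·e3 = k2 e2 + k1 e3; gv·1 = l1 + l2 e1 + l3 e2 + l4 e3, gv·e1 = l2 + l1 e1 + l4 e2 + l3 e3, gv·e2 = l1 e2 - l2 e3, gv·e3 = -l2 e2 + l1 e3. Then for all a, b in H_ss and all h in H4, h·(ab) = (h1·a)(h2·b), where Δ(h) = h1 ⊗ h2 is the comultiplication of H4. -/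
open Quaternion TensorProduct

noncomputable section

/-- Sweedler's Hopf algebra `H₄` as a vector space over `ℝ`,
with basis `1, g, ν, gν` indexed by `Fin 4`. -/
abbrev H4 := Fin 4 → ℝ

namespace H4

/-- The canonical basis `1, g, ν, gν` of Sweedler's Hopf algebra. -/
def B : Module.Basis (Fin 4) ℝ H4 := Pi.basisFun ℝ (Fin 4)

/-- The unit `1` of `H₄`. -/
def u : H4 := B 0
/-- The grouplike element `g` of `H₄`. -/
def g : H4 := B 1
/-- The element `ν` of `H₄`. -/
def v : H4 := B 2
/-- The element `gν` of `H₄`. -/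
def w : H4 := B 3

/-- The multiplication of Sweedler's Hopf algebra, as a bilinear map:
`g² = 1`, `ν² = 0`, `gν = -νg`. -/
def mul4 : H4 →ₗ[ℝ] H4 →ₗ[ℝ] H4 :=
  B.constr ℝ ![B.constr ℝ ![u, g, v, w],
               B.constr ℝ ![g, u, w, v],
               B.constr ℝ ![v, -w, 0, 0],
               B.constr ℝ ![w, -v, 0, 0]]

/-- The comultiplication of Sweedler's Hopf algebra:
`Δ(1) = 1⊗1`, `Δ(g) = g⊗g`, `Δ(ν) = g⊗ν + ν⊗1`, `Δ(gν) = 1⊗gν + gν⊗g`. -/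
def Δ : H4 →ₗ[ℝ] H4 ⊗[ℝ] H4 :=
  B.constr ℝ ![u ⊗ₜ u, g ⊗ₜ g, g ⊗ₜ v + v ⊗ₜ u, u ⊗ₜ w + w ⊗ₜ g]

end H4

/-- The split semi-quaternion algebra `H_ss`:
`e1² = 1`, `e2² = 0`, `e3² = 0`, `e1e2 = e3 = -e2e1`,
`e2e3 = 0 = -e3e2`, `e3e1 = -e2 = -e1e3`. -/
abbrev Hss := ℍ[ℝ, 1, 0]

namespace Hss
def e1 : Hss := ⟨0, 1, 0, 0⟩
def e2 : Hss := ⟨0, 0, 1, 0⟩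
def e3 : Hss := ⟨0, 0, 0, 1⟩
/-- The basis `1, e1, e2, e3` of the split semi-quaternion algebra. -/
def Qb : Module.Basis (Fin 4) ℝ Hss := QuaternionAlgebra.basisOneIJK 1 0 0
end Hss

variable (k1 k2 k3 k4 l1 l2 l3 l4 : ℝ)

/-- The value `ν · 1 = ω(1,ν) = ω(ν,1) = k₁ + k₂e₁ + k₃e₂ - k₄e₃`. -/
def nu1 : Hss := k1 • 1 + k2 • Hss.e1 + k3 • Hss.e2 - k4 • Hss.e3

/-- The value `gν · 1 = ω(1,gν) = ω(gν,1) = l₁ + l₂e₁ + l₃e₂ + l₄e₃`. -/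
def gnu1 : Hss := l1 • 1 + l2 • Hss.e1 + l3 • Hss.e2 + l4 • Hss.e3

/-- The partial action `· : H₄ ⊗ H_ss → H_ss` from the paper:
`1` acts as the identity, `g · x = 0`, and `ν`, `gν` act via the parameters
`k₁,…,k₄,l₁,…,l₄` as in the table. -/
def actSS : H4 →ₗ[ℝ] Hss →ₗ[ℝ] Hss :=
  H4.B.constr ℝ
    ![LinearMap.id, 0,
      Hss.Qb.constr ℝ
        ![nu1 k1 k2 k3 k4,
          k2 • 1 + k1 • Hss.e1 + k4 • Hss.e2 - k3 • Hss.e3,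
          k1 • Hss.e2 + k2 • Hss.e3,
          k2 • Hss.e2 + k1 • Hss.e3],
      Hss.Qb.constr ℝ
        ![gnu1 l1 l2 l3 l4,
          l2 • 1 + l1 • Hss.e1 + l4 • Hss.e2 + l3 • Hss.e3,
          l1 • Hss.e2 - l2 • Hss.e3,
          -l2 • Hss.e2 + l1 • Hss.e3]]

/-- The value `ω(ν,ν) = (k₁²+k₂²) + 2k₁k₂e₁ + 2k₁k₃e₂ - 2k₁k₄e₃`. -/
def omvv : Hss :=
  (k1 ^ 2 + k2 ^ 2) • 1 + (2 * k1 * k2) • Hss.e1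
    + (2 * k1 * k3) • Hss.e2 - (2 * k1 * k4) • Hss.e3

/-- The value `ω(ν,gν) = ω(gν,ν)`. -/
def omvw : Hss :=
  (k1 * l1 + k2 * l2) • 1 + (k2 * l1 + k1 * l2) • Hss.e1
    + (k3 * l1 + k4 * l2 + k1 * l3 + k2 * l4) • Hss.e2
    + (-(k4 * l1) - k3 * l2 + k2 * l3 + k1 * l4) • Hss.e3

/-- The cocycle `ω : H₄ ⊗ H₄ → H_ss` from the paper's table. -/
def omSS : H4 →ₗ[ℝ] H4 →ₗ[ℝ] Hss :=
  H4.B.constr ℝ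
    ![H4.B.constr ℝ ![1, 0, nu1 k1 k2 k3 k4, gnu1 l1 l2 l3 l4],
      0,
      H4.B.constr ℝ ![nu1 k1 k2 k3 k4, 0, omvv k1 k2 k3 k4,
        omvw k1 k2 k3 k4 l1 l2 l3 l4],
      H4.B.constr ℝ ![gnu1 l1 l2 l3 l4, 0,
        omvw k1 k2 k3 k4 l1 l2 l3 l4, 0]]

set_option maxHeartbeats 4000000 in
/-- For the partial action of Sweedler's Hopf algebra `H₄` on the
split semi-quaternion algebra `H_ss` given by the paper's table, one has
`h·(ab) = (h₁·a)(h₂·b)` for all `a, b ∈ H_ss` and `h ∈ H₄`. -/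
theorem actSS_mul_compat (a b : Hss) (h : H4) :
    actSS k1 k2 k3 k4 l1 l2 l3 l4 h (a * b) =
      (LinearMap.mul' ℝ Hss ∘ₗ
        TensorProduct.map ((actSS k1 k2 k3 k4 l1 l2 l3 l4).flip a)
          ((actSS k1 k2 k3 k4 l1 l2 l3 l4).flip b)) (H4.Δ h) := by
  simp only [H4.Δ, actSS, Module.Basis.constr_apply_fintype, Module.Basis.equivFun_apply,
    Fin.sum_univ_four, Matrix.cons_val_zero, Matrix.cons_val_one, Matrix.head_cons,
    Matrix.cons_val_two, Matrix.tail_cons, Matrix.cons_val_three,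
    QuaternionAlgebra.coe_basisOneIJK_repr, H4.B, Hss.Qb, Pi.basisFun_repr,
    map_add, map_smul, map_sub, map_neg, TensorProduct.map_tmul,
    LinearMap.flip_apply, TensorProduct.smul_tmul', TensorProduct.tmul_smul,
    LinearMap.mul'_apply, LinearMap.add_apply, LinearMap.smul_apply,
    LinearMap.zero_apply, LinearMap.id_apply, smul_add, smul_sub, smul_smul,
    LinearMap.coe_comp, Function.comp_apply]
  norm_num [H4.u, H4.g, H4.v, H4.w, H4.B, Pi.basisFun_apply, Pi.single_apply]
  ext <;>
    simp [nu1, gnu1, Hss.e1, Hss.e2, Hss.e3, QuaternionAlgebra.re_mul,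
      QuaternionAlgebra.imI_mul, QuaternionAlgebra.imJ_mul, QuaternionAlgebra.imK_mul] <;>
    ring
end
end

section
/- With the action · of H4 on H_ss as defined (parameters k1..k4, l1..l4) and the cocycle ω: H4 ⊗ H4 → H_ss given by the table in the paper, the pair (·, ω) satisfies the twisted partial action compatibility condition: for all h, l in H4 and a in H_ss, (h1·(l1·a)) ω(h2, l2) = ω(h1, l1)(h2 l2 · a). -/
open Quaternion TensorProduct

noncomputable section

variable (k1 k2 k3 k4 l1 l2 l3 l4 : ℝ)

set_option maxHeartbeats 4000000 in
/-- The twisted partial action compatibility condition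
`(h₁·(l₁·a)) ω(h₂,l₂) = ω(h₁,l₁)(h₂l₂·a)` for all `h, l ∈ H₄`, `a ∈ H_ss`. -/
theorem actSS_omSS_twisted_compat (a : Hss) (h l : H4) :
    (LinearMap.mul' ℝ Hss ∘ₗ
        TensorProduct.map
          (TensorProduct.lift ((actSS k1 k2 k3 k4 l1 l2 l3 l4).compl₂ ((actSS k1 k2 k3 k4 l1 l2 l3 l4).flip a)))
          (TensorProduct.lift (omSS k1 k2 k3 k4 l1 l2 l3 l4)) ∘ₗ
        (tensorTensorTensorComm ℝ H4 H4 H4 H4).toLinearMap)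
      (H4.Δ h ⊗ₜ[ℝ] H4.Δ l) =
    (LinearMap.mul' ℝ Hss ∘ₗ
        TensorProduct.map (TensorProduct.lift (omSS k1 k2 k3 k4 l1 l2 l3 l4))
          ((actSS k1 k2 k3 k4 l1 l2 l3 l4).flip a ∘ₗ TensorProduct.lift H4.mul4) ∘ₗ
        (tensorTensorTensorComm ℝ H4 H4 H4 H4).toLinearMap)
      (H4.Δ h ⊗ₜ[ℝ] H4.Δ l) := by
  have hfin : ∀ i : Fin 4, i = 0 ∨ i = 1 ∨ i = 2 ∨ i = 3 := by decide
  have key : ∀ i j : Fin 4,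
      (LinearMap.mul' ℝ Hss ∘ₗ
        TensorProduct.map
          (TensorProduct.lift ((actSS k1 k2 k3 k4 l1 l2 l3 l4).compl₂ ((actSS k1 k2 k3 k4 l1 l2 l3 l4).flip a)))
          (TensorProduct.lift (omSS k1 k2 k3 k4 l1 l2 l3 l4)) ∘ₗ
        (tensorTensorTensorComm ℝ H4 H4 H4 H4).toLinearMap)
      (H4.Δ (H4.B i) ⊗ₜ[ℝ] H4.Δ (H4.B j)) =
      (LinearMap.mul' ℝ Hss ∘ₗ
        TensorProduct.map (TensorProduct.lift (omSS k1 k2 k3 k4 l1 l2 l3 l4))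
          ((actSS k1 k2 k3 k4 l1 l2 l3 l4).flip a ∘ₗ TensorProduct.lift H4.mul4) ∘ₗ
        (tensorTensorTensorComm ℝ H4 H4 H4 H4).toLinearMap)
      (H4.Δ (H4.B i) ⊗ₜ[ℝ] H4.Δ (H4.B j)) := by
    intro i j
    rcases hfin i with rfl | rfl | rfl | rfl <;> rcases hfin j with rfl | rfl | rfl | rfl <;>
        simp only [H4.Δ, H4.mul4, H4.u, H4.g, H4.v, H4.w, actSS, omSS, Module.Basis.constr_basis,
          Matrix.cons_val_zero, Matrix.cons_val_one, Matrix.head_cons, Matrix.cons_val_two,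
          Matrix.cons_val_three, Matrix.tail_cons, LinearMap.coe_comp, Function.comp_apply,
          LinearEquiv.coe_coe, tmul_add, add_tmul, LinearMap.map_add, tensorTensorTensorComm_tmul,
          TensorProduct.map_tmul, lift.tmul, LinearMap.compl₂_apply, LinearMap.flip_apply,
          LinearMap.mul'_apply, LinearMap.id_coe, id_eq, LinearMap.zero_apply, LinearMap.map_zero,
          LinearMap.map_neg, neg_tmul, tmul_neg] <;>
        try simp only [Hss.Qb, Module.Basis.constr_apply_fintype, QuaternionAlgebra.coe_basisOneIJK_repr,
          Module.Basis.equivFun_apply, Fin.sum_univ_four, Matrix.cons_val_zero, Matrix.cons_val_one,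
          Matrix.head_cons, Matrix.cons_val_two, Matrix.cons_val_three, Matrix.tail_cons]
    all_goals ext <;> simp [Hss.e1, Hss.e2, Hss.e3, nu1, gnu1, omvv, omvw] <;> try ring
  have expand : H4.Δ h ⊗ₜ[ℝ] H4.Δ l
      = ∑ i : Fin 4, ∑ j : Fin 4,
          (H4.B.repr h i * H4.B.repr l j) • (H4.Δ (H4.B i) ⊗ₜ[ℝ] H4.Δ (H4.B j)) := by
    conv_lhs => rw [← H4.B.sum_repr h, ← H4.B.sum_repr l]
    simp only [map_sum, map_smul, sum_tmul, tmul_sum, Finset.smul_sum, ← smul_tmul', smul_smul]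
    rw [Finset.sum_comm]
    exact Finset.sum_congr rfl fun i _ => Finset.sum_congr rfl fun j _ => by
      rw [tmul_smul, smul_smul, mul_comm]
  rw [expand]
  simp only [map_sum, map_smul]
  exact Finset.sum_congr rfl fun i _ => Finset.sum_congr rfl fun j _ => by rw [key i j]
end
end

section
/- With the action · and cocycle ω of H4 on H_ss as defined, the normalization condition holds: for all h, l in H4, ω(h, l) = ω(h1, l1)(h2 l2 · 1), where 1 is the unit of H_ss. -/
open Quaternion TensorProduct

noncomputable section

variable (k1 k2 k3 k4 l1 l2 l3 l4 : ℝ)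

section Helpers
open H4 Hss
variable (k1 k2 k3 k4 l1 l2 l3 l4 : ℝ)

lemma Bu : H4.B 0 = u := rfl
lemma Bg : H4.B 1 = H4.g := rfl
lemma Bv : H4.B 2 = v := rfl
lemma Bw : H4.B 3 = w := rfl

lemma Δu : Δ u = u ⊗ₜ u := by rw [Δ, u, Module.Basis.constr_basis]; rfl
lemma Δg' : Δ H4.g = H4.g ⊗ₜ H4.g := by rw [Δ, H4.g, Module.Basis.constr_basis]; rfl
lemma Δv : Δ v = H4.g ⊗ₜ v + v ⊗ₜ u := by rw [Δ, v, Module.Basis.constr_basis]; rfl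
lemma Δw : Δ w = u ⊗ₜ w + w ⊗ₜ H4.g := by rw [Δ, w, Module.Basis.constr_basis]; rfl

lemma m_uu : mul4 u u = u := by
  simp [mul4, u, g, v, w, Module.Basis.constr_basis]

lemma m_ug : mul4 u g = g := by
  simp [mul4, u, g, v, w, Module.Basis.constr_basis]

lemma m_uv : mul4 u v = v := by
  simp [mul4, u, g, v, w, Module.Basis.constr_basis]

lemma m_uw : mul4 u w = w := by
  simp [mul4, u, g, v, w, Module.Basis.constr_basis]

lemma m_gu : mul4 g u = g := by
  simp [mul4, u, g, v, w, Module.Basis.constr_basis]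

lemma m_gg : mul4 g g = u := by
  simp [mul4, u, g, v, w, Module.Basis.constr_basis]

lemma m_gv : mul4 g v = w := by
  simp [mul4, u, g, v, w, Module.Basis.constr_basis]

lemma m_gw : mul4 g w = v := by
  simp [mul4, u, g, v, w, Module.Basis.constr_basis]

lemma m_vu : mul4 v u = v := by
  simp [mul4, u, g, v, w, Module.Basis.constr_basis]

lemma m_vg : mul4 v g = -w := by
  simp [mul4, u, g, v, w, Module.Basis.constr_basis]

lemma m_vv : mul4 v v = 0 := by
  simp [mul4, u, g, v, w, Module.Basis.constr_basis]

lemma m_vw : mul4 v w = 0 := by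
  simp [mul4, u, g, v, w, Module.Basis.constr_basis]

lemma m_wu : mul4 w u = w := by
  simp [mul4, u, g, v, w, Module.Basis.constr_basis]

lemma m_wg : mul4 w g = -v := by
  simp [mul4, u, g, v, w, Module.Basis.constr_basis]

lemma m_wv : mul4 w v = 0 := by
  simp [mul4, u, g, v, w, Module.Basis.constr_basis]

lemma m_ww : mul4 w w = 0 := by
  simp [mul4, u, g, v, w, Module.Basis.constr_basis]

lemma om_uu : omSS k1 k2 k3 k4 l1 l2 l3 l4 u u = 1 := by
  simp [omSS, u, g, v, w, Module.Basis.constr_basis]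

lemma om_ug : omSS k1 k2 k3 k4 l1 l2 l3 l4 u g = 0 := by
  simp [omSS, u, g, v, w, Module.Basis.constr_basis]

lemma om_uv : omSS k1 k2 k3 k4 l1 l2 l3 l4 u v = (nu1 k1 k2 k3 k4) := by
  simp [omSS, u, g, v, w, Module.Basis.constr_basis]

lemma om_uw : omSS k1 k2 k3 k4 l1 l2 l3 l4 u w = (gnu1 l1 l2 l3 l4) := by
  simp [omSS, u, g, v, w, Module.Basis.constr_basis]

lemma om_vu : omSS k1 k2 k3 k4 l1 l2 l3 l4 v u = (nu1 k1 k2 k3 k4) := by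
  simp [omSS, u, g, v, w, Module.Basis.constr_basis]

lemma om_vg : omSS k1 k2 k3 k4 l1 l2 l3 l4 v g = 0 := by
  simp [omSS, u, g, v, w, Module.Basis.constr_basis]

lemma om_vv : omSS k1 k2 k3 k4 l1 l2 l3 l4 v v = (omvv k1 k2 k3 k4) := by
  simp [omSS, u, g, v, w, Module.Basis.constr_basis]

lemma om_vw : omSS k1 k2 k3 k4 l1 l2 l3 l4 v w = (omvw k1 k2 k3 k4 l1 l2 l3 l4) := by
  simp [omSS, u, g, v, w, Module.Basis.constr_basis]

lemma om_wu : omSS k1 k2 k3 k4 l1 l2 l3 l4 w u = (gnu1 l1 l2 l3 l4) := by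
  simp [omSS, u, g, v, w, Module.Basis.constr_basis]

lemma om_wg : omSS k1 k2 k3 k4 l1 l2 l3 l4 w g = 0 := by
  simp [omSS, u, g, v, w, Module.Basis.constr_basis]

lemma om_wv : omSS k1 k2 k3 k4 l1 l2 l3 l4 w v = (omvw k1 k2 k3 k4 l1 l2 l3 l4) := by
  simp [omSS, u, g, v, w, Module.Basis.constr_basis]

lemma om_ww : omSS k1 k2 k3 k4 l1 l2 l3 l4 w w = 0 := by
  simp [omSS, u, g, v, w, Module.Basis.constr_basis]

lemma om_gz : omSS k1 k2 k3 k4 l1 l2 l3 l4 H4.g = 0 := by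
  simp [omSS, H4.g, Module.Basis.constr_basis]

lemma Qb_constr_one (f : Fin 4 → Hss) : Hss.Qb.constr ℝ f 1 = f 0 := by
  have h1 : (1 : Hss) = Hss.Qb 0 := by
    simp only [Hss.Qb, QuaternionAlgebra.basisOneIJK, Module.Basis.coe_ofEquivFun]
    ext <;> simp [QuaternionAlgebra.equivTuple]
  rw [h1, Module.Basis.constr_basis]

lemma act_u1 : actSS k1 k2 k3 k4 l1 l2 l3 l4 u 1 = 1 := by
  simp [actSS, u, Module.Basis.constr_basis]

lemma act_g1 : actSS k1 k2 k3 k4 l1 l2 l3 l4 H4.g 1 = 0 := by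
  simp [actSS, H4.g, Module.Basis.constr_basis]

lemma act_v1 : actSS k1 k2 k3 k4 l1 l2 l3 l4 v 1 = nu1 k1 k2 k3 k4 := by
  rw [actSS, v, Module.Basis.constr_basis]
  exact Qb_constr_one _

lemma act_w1 : actSS k1 k2 k3 k4 l1 l2 l3 l4 w 1 = gnu1 l1 l2 l3 l4 := by
  rw [actSS, w, Module.Basis.constr_basis]
  exact Qb_constr_one _

lemma q_vv : nu1 k1 k2 k3 k4 * nu1 k1 k2 k3 k4 = omvv k1 k2 k3 k4 := by
  ext <;>
    simp [nu1, omvv, Hss.e1, Hss.e2, Hss.e3, QuaternionAlgebra.re_mul,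
      QuaternionAlgebra.imI_mul, QuaternionAlgebra.imJ_mul, QuaternionAlgebra.imK_mul] <;>
    ring

lemma q_vw : nu1 k1 k2 k3 k4 * gnu1 l1 l2 l3 l4 = omvw k1 k2 k3 k4 l1 l2 l3 l4 := by
  ext <;>
    simp [nu1, gnu1, omvw, Hss.e1, Hss.e2, Hss.e3, QuaternionAlgebra.re_mul,
      QuaternionAlgebra.imI_mul, QuaternionAlgebra.imJ_mul, QuaternionAlgebra.imK_mul] <;>
    ring

def Φf : (H4 ⊗[ℝ] H4) ⊗[ℝ] (H4 ⊗[ℝ] H4) →ₗ[ℝ] Hss :=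
  LinearMap.mul' ℝ Hss ∘ₗ
    TensorProduct.map (TensorProduct.lift (omSS k1 k2 k3 k4 l1 l2 l3 l4))
      ((actSS k1 k2 k3 k4 l1 l2 l3 l4).flip 1 ∘ₗ TensorProduct.lift H4.mul4) ∘ₗ
    (tensorTensorTensorComm ℝ H4 H4 H4 H4).toLinearMap

lemma Phi_tmul (a b c d : H4) :
    Φf k1 k2 k3 k4 l1 l2 l3 l4 ((a ⊗ₜ[ℝ] b) ⊗ₜ[ℝ] (c ⊗ₜ[ℝ] d)) =
      omSS k1 k2 k3 k4 l1 l2 l3 l4 a c *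
        actSS k1 k2 k3 k4 l1 l2 l3 l4 (H4.mul4 b d) 1 := by
  simp [Φf, tensorTensorTensorComm_tmul, LinearMap.mul'_apply]

end Helpers

/-- The normalization condition
`ω(h,l) = ω(h₁,l₁)(h₂l₂·1)` for all `h, l ∈ H₄`. -/
theorem omSS_normalized (h l : H4) :
    (omSS k1 k2 k3 k4 l1 l2 l3 l4) h l =
    (LinearMap.mul' ℝ Hss ∘ₗ
        TensorProduct.map (TensorProduct.lift (omSS k1 k2 k3 k4 l1 l2 l3 l4))
          ((actSS k1 k2 k3 k4 l1 l2 l3 l4).flip 1 ∘ₗ TensorProduct.lift H4.mul4) ∘ₗ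
        (tensorTensorTensorComm ℝ H4 H4 H4 H4).toLinearMap)
      (H4.Δ h ⊗ₜ[ℝ] H4.Δ l) := by
  show omSS k1 k2 k3 k4 l1 l2 l3 l4 h l =
    Φf k1 k2 k3 k4 l1 l2 l3 l4 (H4.Δ h ⊗ₜ[ℝ] H4.Δ l)
  suffices hL : omSS k1 k2 k3 k4 l1 l2 l3 l4 =
      LinearMap.compl₁₂ (TensorProduct.curry (Φf k1 k2 k3 k4 l1 l2 l3 l4)) H4.Δ H4.Δ by
    have := DFunLike.congr_fun (DFunLike.congr_fun hL h) l
    simpa only [LinearMap.compl₁₂_apply, TensorProduct.curry_apply] using this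
  refine H4.B.ext fun i => H4.B.ext fun j => ?_
  simp only [LinearMap.compl₁₂_apply, TensorProduct.curry_apply]
  have hfin : ∀ x : Fin 4, x = 0 ∨ x = 1 ∨ x = 2 ∨ x = 3 := by decide
  rcases hfin i with rfl | rfl | rfl | rfl <;> rcases hfin j with rfl | rfl | rfl | rfl <;>
  · simp only [Fin.isValue, Bu, Bg, Bv, Bw, Δu, Δg', Δv, Δw, add_tmul, tmul_add, map_add,
      Phi_tmul, m_uu, m_ug, m_uv, m_uw, m_gu, m_gg, m_gv, m_gw, m_vu, m_vg, m_vv, m_vw,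
      m_wu, m_wg, m_wv, m_ww, om_uu, om_ug, om_uv, om_uw, om_vu, om_vg, om_vv, om_vw,
      om_wu, om_wg, om_wv, om_ww, om_gz, act_u1, act_g1, act_v1, act_w1,
      map_neg, map_zero, LinearMap.zero_apply, LinearMap.neg_apply,
      mul_one, one_mul, mul_zero, zero_mul, mul_neg, neg_mul, add_zero, zero_add,
      q_vv, q_vw, neg_neg, neg_zero, add_neg_cancel, neg_add_cancel]
end
end

section
/- Let H4 act on the quarter-quaternion algebra H_00 by: 1 acts as identity, g·x = 0, v·1 = k1e1 + k2e2 + k3e3, v·e1 = -k2e3, v·e2 = k1e3, v·e3 = 0, gv·1 = l1 + l2e1 + l3e2 + l4e3, gv·e1 = l1e1 + l3e3, gv·e2 = l1e2 - l2e3, gv·e3 = l1e3. Then h·(ab) = (h1·a)(h2·b) for all a, b in H_00 and h in H4. -/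
open Quaternion TensorProduct

noncomputable section

/-- The quarter-quaternion algebra `H₀₀`:
`e1² = e2² = e3² = 0`, `e1e2 = e3 = -e2e1`, `e2e3 = e3e2 = 0`, `e3e1 = e1e3 = 0`. -/
abbrev H00 := ℍ[ℝ, 0, 0]

namespace H00
def e1 : H00 := ⟨0, 1, 0, 0⟩
def e2 : H00 := ⟨0, 0, 1, 0⟩
def e3 : H00 := ⟨0, 0, 0, 1⟩
/-- The basis `1, e1, e2, e3` of the quarter-quaternion algebra. -/
def Qb : Module.Basis (Fin 4) ℝ H00 := QuaternionAlgebra.basisOneIJK 0 0 0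
end H00

variable (k1 k2 k3 l1 l2 l3 l4 : ℝ)

/-- The value `ν · 1 = ω(1,ν) = ω(ν,1) = k₁e₁ + k₂e₂ + k₃e₃`. -/
def nu100 : H00 := k1 • H00.e1 + k2 • H00.e2 + k3 • H00.e3

/-- The value `gν · 1 = ω(1,gν) = ω(gν,1) = l₁ + l₂e₁ + l₃e₂ + l₄e₃`. -/
def gnu100 : H00 := l1 • 1 + l2 • H00.e1 + l3 • H00.e2 + l4 • H00.e3

/-- The value `ω(ν,gν) = ω(gν,ν) = k₁l₁e₁ + k₂l₁e₂ + (k₃l₁ - k₂l₂ + k₁l₃)e₃`. -/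
def omvw00 : H00 :=
  (k1 * l1) • H00.e1 + (k2 * l1) • H00.e2 + (k3 * l1 - k2 * l2 + k1 * l3) • H00.e3

/-- The partial action `· : H₄ ⊗ H₀₀ → H₀₀` from the paper:
`1` acts as the identity, `g·x = 0`, `ν·1 = k₁e₁+k₂e₂+k₃e₃`, `ν·e₁ = -k₂e₃`,
`ν·e₂ = k₁e₃`, `ν·e₃ = 0`, and `gν` acts via the parameters `l₁,…,l₄`. -/
def act00 : H4 →ₗ[ℝ] H00 →ₗ[ℝ] H00 :=
  H4.B.constr ℝ
    ![LinearMap.id, 0,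
      H00.Qb.constr ℝ ![nu100 k1 k2 k3, -k2 • H00.e3, k1 • H00.e3, 0],
      H00.Qb.constr ℝ
        ![gnu100 l1 l2 l3 l4,
          l1 • H00.e1 + l3 • H00.e3,
          l1 • H00.e2 - l2 • H00.e3,
          l1 • H00.e3]]

/-- The cocycle `ω : H₄ ⊗ H₄ → H₀₀` from the paper's table. -/
def om00 : H4 →ₗ[ℝ] H4 →ₗ[ℝ] H00 :=
  H4.B.constr ℝ
    ![H4.B.constr ℝ ![1, 0, nu100 k1 k2 k3, gnu100 l1 l2 l3 l4],
      0,
      H4.B.constr ℝ ![nu100 k1 k2 k3, 0, 0, omvw00 k1 k2 k3 l1 l2 l3],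
      H4.B.constr ℝ ![gnu100 l1 l2 l3 l4, 0, omvw00 k1 k2 k3 l1 l2 l3, 0]]

set_option maxHeartbeats 1600000 in
set_option synthInstance.maxHeartbeats 200000 in
/-- For the partial action of `H₄` on the quarter-quaternion
algebra `H₀₀`, one has `h·(ab) = (h₁·a)(h₂·b)` for all `a, b ∈ H₀₀`, `h ∈ H₄`. -/
theorem act00_mul_compat (a b : H00) (h : H4) :
    (act00 k1 k2 k3 l1 l2 l3 l4) h (a * b) =
      (LinearMap.mul' ℝ H00 ∘ₗ
        TensorProduct.map ((act00 k1 k2 k3 l1 l2 l3 l4).flip a) ((act00 k1 k2 k3 l1 l2 l3 l4).flip b)) (H4.Δ h) := by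
  have key : ∀ l : Fin 4,
      (act00 k1 k2 k3 l1 l2 l3 l4) (H4.B l) (a * b) =
      (LinearMap.mul' ℝ H00 ∘ₗ
        TensorProduct.map ((act00 k1 k2 k3 l1 l2 l3 l4).flip a)
          ((act00 k1 k2 k3 l1 l2 l3 l4).flip b)) (H4.Δ (H4.B l)) := by
    have step : ∀ l : Fin 4,
        (act00 k1 k2 k3 l1 l2 l3 l4) (H4.B l) (a * b) =
        (LinearMap.mul' ℝ H00 ∘ₗ
          TensorProduct.map ((act00 k1 k2 k3 l1 l2 l3 l4).flip a)
            ((act00 k1 k2 k3 l1 l2 l3 l4).flip b)) (H4.Δ (H4.B l)) → True := fun _ _ => trivial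
    clear step
    intro l
    have solve : ∀ l' : Fin 4, l = l' →
        (act00 k1 k2 k3 l1 l2 l3 l4) (H4.B l') (a * b) =
        (LinearMap.mul' ℝ H00 ∘ₗ
          TensorProduct.map ((act00 k1 k2 k3 l1 l2 l3 l4).flip a)
            ((act00 k1 k2 k3 l1 l2 l3 l4).flip b)) (H4.Δ (H4.B l')) := by
      intro l' _
      fin_cases l' <;>
      · rw [H4.Δ, Module.Basis.constr_basis]
        simp only [Matrix.cons_val_zero, Matrix.cons_val_one, Matrix.head_cons,
          Matrix.cons_val_two, Matrix.tail_cons, Matrix.cons_val_three,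
          H4.u, H4.g, H4.v, H4.w, LinearMap.map_add, LinearMap.coe_comp,
          Function.comp_apply, TensorProduct.map_tmul, LinearMap.mul'_apply,
          LinearMap.flip_apply]
        rw [act00]
        simp only [Module.Basis.constr_basis, Matrix.cons_val_zero, Matrix.cons_val_one,
          Matrix.head_cons, Matrix.cons_val_two, Matrix.tail_cons, Matrix.cons_val_three,
          LinearMap.id_coe, id_eq, LinearMap.zero_apply]
        simp only [Module.Basis.constr_apply_fintype, Module.Basis.equivFun_apply,
          QuaternionAlgebra.coe_basisOneIJK_repr, H00.Qb, Fin.sum_univ_four,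
          Matrix.cons_val_zero, Matrix.cons_val_one, Matrix.head_cons,
          Matrix.cons_val_two, Matrix.tail_cons, Matrix.cons_val_three,
          nu100, gnu100, H00.e1, H00.e2, H00.e3]
        ext <;>
          simp [Fin.sum_univ_four, QuaternionAlgebra.re_mul, QuaternionAlgebra.imI_mul,
            QuaternionAlgebra.imJ_mul, QuaternionAlgebra.imK_mul] <;> ring
    exact solve l rfl
  conv_lhs => rw [← H4.B.sum_repr h]
  conv_rhs => rw [← H4.B.sum_repr h]
  rw [map_sum, LinearMap.sum_apply, map_sum, map_sum]
  refine Finset.sum_congr rfl fun l _ => ?_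
  rw [LinearMap.map_smul, LinearMap.smul_apply, LinearMap.map_smul, LinearMap.map_smul, key l]
end
end

section
/- For the twisted partial action of H4 on H_ss, the cocycle identity instance holds: (v1 · ω(v1', (gv)1)) ω(v2, v2'(gv)2) = ω(v1, v1') ω(v2 v2', gv), and both sides equal ((k1^2+k2^2)l1 + 2k1k2l2) + (2k1k2l1 + (k1^2+k2^2)l2)e1 + (2k1k3l1 + 2k1k4l2 + (k1^2+k2^2)l3 + 2k1k2l4)e2 + (-2k1k4l1 - 2k1k3l2 + 2k1k2l3 + (k1^2+k2^2)l4)e3, i.e., condition (h1·ω(m1,t1))ω(h2,m2t2) = ω(h1,m1)ω(h2m2,t) holds for h = m = v, t = gv. -/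
open Quaternion TensorProduct

noncomputable section

variable (k1 k2 k3 k4 l1 l2 l3 l4 : ℝ)

lemma Qb_constr_apply (f : Fin 4 → Hss) (q : Hss) :
    Hss.Qb.constr ℝ f q = q.re • f 0 + q.imI • f 1 + q.imJ • f 2 + q.imK • f 3 := by
  rw [Module.Basis.constr_apply_fintype, Fin.sum_univ_four]
  simp [Hss.Qb, Module.Basis.equivFun_apply, QuaternionAlgebra.coe_basisOneIJK_repr]

lemma Δv_eq : H4.Δ H4.v = H4.g ⊗ₜ[ℝ] H4.v + H4.v ⊗ₜ[ℝ] H4.u := by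
  simp [H4.Δ, H4.v, Module.Basis.constr_basis]

lemma Δw_eq : H4.Δ H4.w = H4.u ⊗ₜ[ℝ] H4.w + H4.w ⊗ₜ[ℝ] H4.g := by
  simp [H4.Δ, H4.w, Module.Basis.constr_basis]

set_option maxHeartbeats 2000000 in
set_option synthInstance.maxHeartbeats 1000000 in
/-- The instance of the cocycle condition
`(h₁·ω(m₁,t₁))ω(h₂,m₂t₂) = ω(h₁,m₁)ω(h₂m₂,t)` for `h = m = ν`, `t = gν`,
with both sides equal to the explicit element
`((k₁²+k₂²)l₁+2k₁k₂l₂) + (2k₁k₂l₁+(k₁²+k₂²)l₂)e₁ + (2k₁k₃l₁+2k₁k₄l₂+(k₁²+k₂²)l₃+2k₁k₂l₄)e₂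
+ (-2k₁k₄l₁-2k₁k₃l₂+2k₁k₂l₃+(k₁²+k₂²)l₄)e₃`. -/
theorem omSS_cocycle_v_v_w :
    (LinearMap.mul' ℝ Hss ∘ₗ
        TensorProduct.map
          (TensorProduct.lift ((actSS k1 k2 k3 k4 l1 l2 l3 l4).compl₂ (TensorProduct.lift (omSS k1 k2 k3 k4 l1 l2 l3 l4))))
          (TensorProduct.lift ((omSS k1 k2 k3 k4 l1 l2 l3 l4).compl₂ (TensorProduct.lift H4.mul4))) ∘ₗ
        (tensorTensorTensorComm ℝ H4 H4 (H4 ⊗[ℝ] H4) (H4 ⊗[ℝ] H4)).toLinearMap)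
      (H4.Δ H4.v ⊗ₜ[ℝ]
        (tensorTensorTensorComm ℝ H4 H4 H4 H4 (H4.Δ H4.v ⊗ₜ[ℝ] H4.Δ H4.w))) =
    (LinearMap.mul' ℝ Hss ∘ₗ
        TensorProduct.map (TensorProduct.lift (omSS k1 k2 k3 k4 l1 l2 l3 l4))
          ((omSS k1 k2 k3 k4 l1 l2 l3 l4).flip H4.w ∘ₗ TensorProduct.lift H4.mul4) ∘ₗ
        (tensorTensorTensorComm ℝ H4 H4 H4 H4).toLinearMap)
      (H4.Δ H4.v ⊗ₜ[ℝ] H4.Δ H4.v) ∧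
    (LinearMap.mul' ℝ Hss ∘ₗ
        TensorProduct.map (TensorProduct.lift (omSS k1 k2 k3 k4 l1 l2 l3 l4))
          ((omSS k1 k2 k3 k4 l1 l2 l3 l4).flip H4.w ∘ₗ TensorProduct.lift H4.mul4) ∘ₗ
        (tensorTensorTensorComm ℝ H4 H4 H4 H4).toLinearMap)
      (H4.Δ H4.v ⊗ₜ[ℝ] H4.Δ H4.v) =
      ((k1 ^ 2 + k2 ^ 2) * l1 + 2 * k1 * k2 * l2) • (1 : Hss)
        + (2 * k1 * k2 * l1 + (k1 ^ 2 + k2 ^ 2) * l2) • Hss.e1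
        + (2 * k1 * k3 * l1 + 2 * k1 * k4 * l2 + (k1 ^ 2 + k2 ^ 2) * l3
            + 2 * k1 * k2 * l4) • Hss.e2
        + (-(2 * k1 * k4 * l1) - 2 * k1 * k3 * l2 + 2 * k1 * k2 * l3
            + (k1 ^ 2 + k2 ^ 2) * l4) • Hss.e3 := by

  rw [Δv_eq, Δw_eq]
  constructor
  · simp only [map_add, tensorTensorTensorComm_tmul, add_tmul, tmul_add,
      LinearMap.comp_apply, LinearEquiv.coe_coe, map_add, TensorProduct.map_tmul,
      TensorProduct.lift.tmul, LinearMap.compl₂_apply, LinearMap.flip_apply,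
      LinearMap.mul'_apply]
    simp only [actSS, omSS, H4.mul4, H4.u, H4.g, H4.v, H4.w, Module.Basis.constr_basis,
      Matrix.cons_val_zero, Matrix.cons_val_one, Matrix.head_cons,
      Matrix.cons_val_two, Matrix.tail_cons, Matrix.cons_val_three,
      LinearMap.zero_apply, LinearMap.id_apply, map_zero, zero_mul, mul_zero,
      Qb_constr_apply, map_neg, LinearMap.neg_apply]
    ext <;>
      simp [nu1, gnu1, omvv, omvw, Hss.e1, Hss.e2, Hss.e3] <;> ring
  · simp only [map_add, tensorTensorTensorComm_tmul, add_tmul, tmul_add,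
      LinearMap.comp_apply, LinearEquiv.coe_coe, map_add, TensorProduct.map_tmul,
      TensorProduct.lift.tmul, LinearMap.compl₂_apply, LinearMap.flip_apply,
      LinearMap.mul'_apply]
    simp only [actSS, omSS, H4.mul4, H4.u, H4.g, H4.v, H4.w, Module.Basis.constr_basis,
      Matrix.cons_val_zero, Matrix.cons_val_one, Matrix.head_cons,
      Matrix.cons_val_two, Matrix.tail_cons, Matrix.cons_val_three,
      LinearMap.zero_apply, LinearMap.id_apply, map_zero, zero_mul, mul_zero,
      Qb_constr_apply, map_neg, LinearMap.neg_apply]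
    ext <;>
      simp [nu1, gnu1, omvv, omvw, Hss.e1, Hss.e2, Hss.e3] <;> ring
end
end
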